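/- Let G be any finite simple graph and let n be a positive integer. Then N(G×P_n) = Σ_{k=1}^{n} (n−k+1)·s_k, where s_k denotes the number of connected sets of G×P_k that intersect every one of the k columns of G×P_k. -/

import Mathlib

open SimpleGraph Finset
open scoped Classical

/-- A connected set of a graph: a nonempty vertex subset inducing a connected subgraph. -/
def IsConnSet {V : Type*} (G : SimpleGraph V) (C : Finset V) : Prop :=
  C.Nonempty ∧ (G.induce (C : Set V)).Connected

/-- `N(G)`: the number of connected sets of `G`. -/
noncomputable def numConnSets {V : Type*} (G : SimpleGraph V) : ℕ :=
  {C : Finset V | IsConnSet G C}.ncard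
/-- `s_k`: the number of connected sets of `G×P_k` intersecting every one of its `k`
columns. -/
noncomputable def sFull {V : Type*} (G : SimpleGraph V) (k : ℕ) : ℕ :=
  {C : Finset (V × Fin k) | IsConnSet (G □ pathGraph k) C ∧
    ∀ j : Fin k, (C.filter (fun p => p.2 = j)).Nonempty}.ncard

section helpers
variable {V : Type*} {α β : Type*}

lemma isConnSet_image [DecidableEq β] (G : SimpleGraph α) (H : SimpleGraph β) (f : α → β)
    (hf : Function.Injective f) (hadj : ∀ p q, H.Adj (f p) (f q) ↔ G.Adj p q)
    (C : Finset α) : IsConnSet H (C.image f) ↔ IsConnSet G C := by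
  have hset : ((C.image f : Finset β) : Set β) = f '' ↑C := Finset.coe_image
  have e : G.induce (C : Set α) ≃g H.induce ((C.image f : Finset β) : Set β) := by
    refine ⟨(Equiv.Set.image f ↑C hf).trans (Equiv.setCongr hset.symm), ?_⟩
    intro u v
    exact hadj u v
  unfold IsConnSet
  rw [e.connected_iff, Finset.image_nonempty]

def embShift (a k n : ℕ) (h : a + k ≤ n) : V × Fin k → V × Fin n :=
  fun p => (p.1, ⟨a + p.2.val, by have := p.2.isLt; omega⟩)

lemma embShift_injective (a k n : ℕ) (h : a + k ≤ n) :
    Function.Injective (embShift (V := V) a k n h) := by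
  intro p q hpq
  simp only [embShift, Prod.mk.injEq, Fin.mk.injEq] at hpq
  exact Prod.ext hpq.1 (Fin.ext (by omega))

lemma embShift_adj (G : SimpleGraph V) (a k n : ℕ) (h : a + k ≤ n)
    (p q : V × Fin k) :
    (G □ pathGraph n).Adj (embShift a k n h p) (embShift a k n h q) ↔
      (G □ pathGraph k).Adj p q := by
  obtain ⟨x, i⟩ := p; obtain ⟨y, j⟩ := q
  simp only [boxProd_adj, pathGraph_adj, embShift, Prod.mk.injEq, Fin.mk.injEq, Fin.ext_iff]
  constructor
  · rintro (⟨h1, h2⟩ | ⟨h1, h2⟩)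
    · exact Or.inl ⟨h1, by omega⟩
    · exact Or.inr ⟨by omega, h2⟩
  · rintro (⟨h1, h2⟩ | ⟨h1, h2⟩)
    · exact Or.inl ⟨h1, by omega⟩
    · exact Or.inr ⟨by omega, h2⟩

lemma walk_ivt {n : ℕ} (G : SimpleGraph V) (C : Finset (V × Fin n))
    {u v : ↥((C : Set (V × Fin n)))}
    (w : ((G □ pathGraph n).induce (C : Set (V × Fin n))).Walk u v) :
    ∀ j : ℕ, ((u : V × Fin n).2 : ℕ) ≤ j → j ≤ ((v : V × Fin n).2 : ℕ) →
    ∃ p ∈ C, ((p.2 : ℕ)) = j := by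
  induction w with
  | @nil u => exact fun j h1 h2 => ⟨u.1, u.2, by omega⟩
  | @cons u u' v hadj w ih =>
    intro j h1 h2
    have hcol : ((u' : V × Fin n).2 : ℕ) ≤ ((u : V × Fin n).2 : ℕ) + 1 := by
      have : (G □ pathGraph n).Adj ↑u ↑u' := hadj
      rw [boxProd_adj] at this
      rcases this with ⟨_, h⟩ | ⟨h, _⟩
      · omega
      · rw [pathGraph_adj] at h; omega
    by_cases hj : ((u' : V × Fin n).2 : ℕ) ≤ j
    · exact ih j hj h2
    · exact ⟨u, u.2, by omega⟩

/-- the column multiset of a connected set is an interval -/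
lemma cols_interval {n : ℕ} (G : SimpleGraph V) (D : Finset (V × Fin n))
    (hD : IsConnSet (G □ pathGraph n) D)
    (hN : (D.image fun p => ((p.2 : ℕ))).Nonempty) (j : ℕ)
    (h1 : (D.image fun p => ((p.2 : ℕ))).min' hN ≤ j)
    (h2 : j ≤ (D.image fun p => ((p.2 : ℕ))).max' hN) :
    ∃ p ∈ D, ((p.2 : ℕ)) = j := by
  obtain ⟨u, huD, hu⟩ := Finset.mem_image.mp (Finset.min'_mem _ hN)
  obtain ⟨v, hvD, hv⟩ := Finset.mem_image.mp (Finset.max'_mem _ hN)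
  obtain ⟨w⟩ := hD.2.preconnected ⟨u, huD⟩ ⟨v, hvD⟩
  exact walk_ivt G D w j (by simpa [hu]) (by simpa [hv])

noncomputable def colKey {n : ℕ} (D : Finset (V × Fin n)) : ℕ × ℕ :=
  (WithTop.untopD 0 ((D.image fun p => ((p.2 : ℕ))).min), WithBot.unbotD 0 ((D.image fun p => ((p.2 : ℕ))).max))

lemma colKey_eq {n : ℕ} (D : Finset (V × Fin n))
    (hN : (D.image fun p => ((p.2 : ℕ))).Nonempty) :
    colKey D = ((D.image fun p => ((p.2 : ℕ))).min' hN,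
                (D.image fun p => ((p.2 : ℕ))).max' hN) := by
  unfold colKey
  rw [← Finset.coe_min' hN, ← Finset.coe_max' hN]
  rfl

end helpers

theorem statement6 {V : Type*} [Fintype V] (G : SimpleGraph V) (n : ℕ) (hn : 0 < n) :
    numConnSets (G □ pathGraph n) =
      ∑ k ∈ Finset.Icc 1 n, (n - k + 1) * sFull G k := by
  classical
  rw [numConnSets, Set.ncard_eq_toFinset_card']
  set S : Finset (Finset (V × Fin n)) :=
    {D : Finset (V × Fin n) | IsConnSet (G □ pathGraph n) D}.toFinset with hS
  set t : Finset (ℕ × ℕ) :=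
    (Finset.range n ×ˢ Finset.range n).filter fun p => p.1 ≤ p.2 with ht
  -- membership facts
  have hmemS : ∀ D, D ∈ S ↔ IsConnSet (G □ pathGraph n) D := by
    intro D; rw [hS, Set.mem_toFinset]; rfl
  have hkey : ∀ D ∈ S, ∀ hN : (D.image fun p => ((p.2 : ℕ))).Nonempty, True := fun _ _ _ => trivial
  have hmaps : ∀ D ∈ S, colKey D ∈ t := by
    intro D hD
    have hDc := (hmemS D).mp hD
    have hN : (D.image fun p => ((p.2 : ℕ))).Nonempty := hDc.1.image _
    rw [colKey_eq D hN]
    have h1 := Finset.min'_mem _ hN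
    have h2 := Finset.max'_mem _ hN
    obtain ⟨u, -, hu⟩ := Finset.mem_image.mp h1
    obtain ⟨v, -, hv⟩ := Finset.mem_image.mp h2
    have hmin := Finset.min'_le _ _ h2
    simp only [ht, Finset.mem_filter, Finset.mem_product, Finset.mem_range]
    have := u.2.isLt; have := v.2.isLt
    exact ⟨⟨by omega, by omega⟩, hmin⟩
  rw [Finset.card_eq_sum_card_fiberwise hmaps]
  have hfiber : ∀ p ∈ t, (S.filter fun D => colKey D = p).card = sFull G (p.2 - p.1 + 1) := by
    rintro ⟨a, b⟩ hab
    simp only [ht, Finset.mem_filter, Finset.mem_product, Finset.mem_range] at hab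
    obtain ⟨⟨han, hbn⟩, hle⟩ := hab
    set k := b - a + 1 with hk
    have hkpos : 0 < k := by omega
    have hakn : a + k ≤ n := by omega
    set emb := embShift (V := V) a k n hakn with hemb
    have hembinj := embShift_injective (V := V) a k n hakn
    set T : Finset (Finset (V × Fin k)) :=
      {C : Finset (V × Fin k) | IsConnSet (G □ pathGraph k) C ∧
        ∀ j : Fin k, (C.filter (fun p => p.2 = j)).Nonempty}.toFinset with hT
    have hmemT : ∀ C, C ∈ T ↔ IsConnSet (G □ pathGraph k) C ∧
        ∀ j : Fin k, (C.filter (fun p => p.2 = j)).Nonempty := by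
      intro C; rw [hT, Set.mem_toFinset]; rfl
    have himg : S.filter (fun D => colKey D = (a, b)) = T.image (fun C => C.image emb) := by
      ext D
      simp only [Finset.mem_filter, Finset.mem_image]
      constructor
      · rintro ⟨hDS, hDkey⟩
        have hDc := (hmemS D).mp hDS
        have hN : (D.image fun p => ((p.2 : ℕ))).Nonempty := hDc.1.image _
        rw [colKey_eq D hN, Prod.mk.injEq] at hDkey
        obtain ⟨hmin, hmax⟩ := hDkey
        have hbounds : ∀ q ∈ D, a ≤ ((q.2 : ℕ)) ∧ ((q.2 : ℕ)) ≤ b := by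
          intro q hq
          have hqmem : ((q.2 : ℕ)) ∈ D.image fun p => ((p.2 : ℕ)) :=
            Finset.mem_image.mpr ⟨q, hq, rfl⟩
          have h1 := Finset.min'_le _ _ hqmem
          have h2 := Finset.le_max' _ _ hqmem
          omega
        set unemb : V × Fin n → V × Fin k :=
          fun q => (q.1, ⟨((q.2 : ℕ) - a) % k, Nat.mod_lt _ hkpos⟩) with hunemb
        refine ⟨D.image unemb, ?_, ?_⟩
        · -- D.image unemb is a full connected set
          have hDC : (D.image unemb).image emb = D := by
            rw [Finset.image_image]
            rw [show (emb ∘ unemb) = fun q : V × Fin n =>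
              (q.1, (⟨a + ((q.2 : ℕ) - a) % k, by
                have := Nat.mod_lt ((q.2 : ℕ) - a) hkpos; omega⟩ : Fin n)) from rfl]
            refine Finset.image_congr ?_ |>.trans Finset.image_id
            intro q hq
            obtain ⟨hq1, hq2⟩ := hbounds q (by simpa using hq)
            have hlt : (q.2 : ℕ) - a < k := by omega
            simp only [id]
            exact Prod.ext rfl (Fin.ext (by simp [Nat.mod_eq_of_lt hlt]; omega))
          rw [hmemT]
          constructor
          · refine (isConnSet_image _ _ emb hembinj (embShift_adj G a k n hakn) _).mp ?_
            rw [hDC]; exact hDc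
          · intro j
            have hj : (j : ℕ) < k := j.isLt
            obtain ⟨q, hqD, hq2⟩ := cols_interval G D hDc hN (a + (j : ℕ))
              (by omega) (by omega)
            refine ⟨unemb q, Finset.mem_filter.mpr ⟨Finset.mem_image_of_mem _ hqD, ?_⟩⟩
            exact Fin.ext (by simp [hunemb, hq2, Nat.mod_eq_of_lt hj])
        · -- image is D
          rw [Finset.image_image]
          rw [show (emb ∘ unemb) = fun q : V × Fin n =>
            (q.1, (⟨a + ((q.2 : ℕ) - a) % k, by
              have := Nat.mod_lt ((q.2 : ℕ) - a) hkpos; omega⟩ : Fin n)) from rfl]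
          refine Finset.image_congr ?_ |>.trans Finset.image_id
          intro q hq
          obtain ⟨hq1, hq2⟩ := hbounds q (by simpa using hq)
          have hlt : (q.2 : ℕ) - a < k := by omega
          simp only [id]
          exact Prod.ext rfl (Fin.ext (by simp [Nat.mod_eq_of_lt hlt]; omega))
      · rintro ⟨C, hCT, rfl⟩
        rw [hmemT] at hCT
        obtain ⟨hCc, hCfull⟩ := hCT
        have hDc : IsConnSet (G □ pathGraph n) (C.image emb) :=
          (isConnSet_image _ _ emb hembinj (embShift_adj G a k n hakn) _).mpr hCc
        refine ⟨(hmemS _).mpr hDc, ?_⟩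
        have hN : ((C.image emb).image fun p => ((p.2 : ℕ))).Nonempty := hDc.1.image _
        rw [colKey_eq _ hN, Prod.mk.injEq]
        have hcols : ((C.image emb).image fun p => ((p.2 : ℕ)))
            = C.image fun p => a + ((p.2 : ℕ)) := by
          rw [Finset.image_image]; rfl
        have hbound : ∀ m ∈ (C.image emb).image fun p => ((p.2 : ℕ)), a ≤ m ∧ m ≤ b := by
          intro m hm
          rw [hcols] at hm
          obtain ⟨q, -, rfl⟩ := Finset.mem_image.mp hm
          have := q.2.isLt; omega
        have hamem : a ∈ (C.image emb).image fun p => ((p.2 : ℕ)) := by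
          obtain ⟨q, hq⟩ := hCfull ⟨0, hkpos⟩
          rw [Finset.mem_filter] at hq
          rw [hcols]
          exact Finset.mem_image.mpr ⟨q, hq.1, by rw [hq.2]; simp⟩
        have hbmem : b ∈ (C.image emb).image fun p => ((p.2 : ℕ)) := by
          obtain ⟨q, hq⟩ := hCfull ⟨k - 1, by omega⟩
          rw [Finset.mem_filter] at hq
          rw [hcols]
          exact Finset.mem_image.mpr ⟨q, hq.1, by rw [hq.2]; simp; omega⟩
        constructor
        · exact le_antisymm (Finset.min'_le _ _ hamem)
            (Finset.le_min' _ _ _ fun m hm => (hbound m hm).1)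
        · exact le_antisymm (Finset.max'_le _ _ _ fun m hm => (hbound m hm).2)
            (Finset.le_max' _ _ hbmem)
    rw [himg, Finset.card_image_of_injective _ (Finset.image_injective hembinj)]
    rw [sFull, Set.ncard_eq_toFinset_card', hT]
  rw [Finset.sum_congr rfl hfiber]
  -- rearrangement of the sum
  have hmaps2 : ∀ p ∈ t, p.2 - p.1 + 1 ∈ Finset.Icc 1 n := by
    rintro ⟨a, b⟩ hab
    simp only [ht, Finset.mem_filter, Finset.mem_product, Finset.mem_range] at hab
    simp only [Finset.mem_Icc]; omega
  rw [← Finset.sum_fiberwise_of_maps_to hmaps2]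
  refine Finset.sum_congr rfl ?_
  intro k hk
  simp only [Finset.mem_Icc] at hk
  have hconst : ∀ p ∈ t.filter (fun p => p.2 - p.1 + 1 = k),
      sFull G (p.2 - p.1 + 1) = sFull G k := by
    intro p hp
    rw [(Finset.mem_filter.mp hp).2]
  rw [Finset.sum_congr rfl hconst, Finset.sum_const, smul_eq_mul]
  congr 1
  have : t.filter (fun p => p.2 - p.1 + 1 = k)
      = (Finset.range (n - k + 1)).image (fun a => (a, a + k - 1)) := by
    ext ⟨a, b⟩
    simp only [ht, Finset.mem_filter, Finset.mem_product, Finset.mem_range,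
      Finset.mem_image, Prod.mk.injEq]
    constructor
    · rintro ⟨⟨⟨han, hbn⟩, hab⟩, hbk⟩
      exact ⟨a, by omega, rfl, by omega⟩
    · rintro ⟨c, hc, rfl, rfl⟩
      omega
  rw [this, Finset.card_image_of_injective, Finset.card_range]
  intro x y hxy
  simpa using congrArg Prod.fst hxy
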